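/- Let x be an element of infinite order in a locally nilpotent group G, and let H be maximal among the subgroups of G subject to the condition H ∩ ⟨x⟩ = 1. Then x normalizes H. -/

import Mathlib

universe u

theorem Subgroup.normal_iSup_of_normal {G : Type u} [Group G] {ι : Sort*}
    (f : ι → Subgroup G) (h : ∀ i, (f i).Normal) : (⨆ i, f i).Normal := by
  constructor
  intro x hx g
  refine Subgroup.iSup_induction (C := fun y => g * y * g⁻¹ ∈ ⨆ i, f i) f hx
    (fun i y hy => le_iSup f i ((h i).conj_mem y hy g)) (by simpa using Subgroup.one_mem _) ?_
  intro a b ha hb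
  have hab : g * (a * b) * g⁻¹ = (g * a * g⁻¹) * (g * b * g⁻¹) := by group
  rw [hab]; exact mul_mem ha hb

/-- The transfinite upper central series of a group, as ordinal-indexed normal subgroups. -/
noncomputable def transUpperCentralSeriesAux (G : Type u) [Group G] :
    Ordinal.{u} → {H : Subgroup G // H.Normal} := fun o =>
  Ordinal.limitRecOn o
    ⟨⊥, inferInstance⟩
    (fun _ Z => ⟨@upperCentralSeriesStep G _ Z.1 Z.2, by
      haveI := Z.2; show (Subgroup.upperCentralSeriesStep Z.1).Normal; rw [Subgroup.upperCentralSeriesStep_eq_comap_center]; infer_instance⟩)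
    (fun o _ ih => ⟨⨆ (o' : Ordinal.{u}) (ho' : o' < o), (ih o' ho').1,
      Subgroup.normal_iSup_of_normal _ fun o' =>
        Subgroup.normal_iSup_of_normal _ fun ho' => (ih o' ho').2⟩)

/-- The transfinite upper central series. -/
noncomputable def transUpperCentralSeries (G : Type u) [Group G] (o : Ordinal.{u}) :
    Subgroup G := (transUpperCentralSeriesAux G o).1

/-- The hypercentre of a group: the union of the transfinite upper central series. -/
noncomputable def hypercenter (G : Type u) [Group G] : Subgroup G :=
  ⨆ o : Ordinal.{u}, transUpperCentralSeries G o

/-- A group is hypercentral if it equals the union of its transfinite upper central series. -/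
def IsHypercentral (G : Type u) [Group G] : Prop := hypercenter G = ⊤

/-- The hypercentral length: the least ordinal `o` with `Z_o(G) = G`. -/
noncomputable def hypercentralLength (G : Type u) [Group G] : Ordinal.{u} :=
  sInf {o : Ordinal.{u} | transUpperCentralSeries G o = ⊤}

/-- A group is locally nilpotent if every finitely generated subgroup is nilpotent. -/
def IsLocallyNilpotent (G : Type*) [Group G] : Prop :=
  ∀ S : Subgroup G, S.FG → Group.IsNilpotent S

open Subgroup Pointwise
open scoped commutatorElement

section Helpers

variable {Q : Type u} [Group Q]

lemma lcs_succ_eq (n : ℕ) : (⊤ : Subgroup Q).lowerCentralSeries (n + 1) = ⁅(⊤ : Subgroup Q).lowerCentralSeries n, ⊤⁆ := rfl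

lemma lcs_map_surjective {H : Type*} [Group H] (f : Q →* H) (hf : Function.Surjective f) (n : ℕ) :
    ((⊤ : Subgroup Q).lowerCentralSeries n).map f = (⊤ : Subgroup H).lowerCentralSeries n := by
  induction n with
  | zero =>
    simp only [Subgroup.lowerCentralSeries_zero]
    exact Subgroup.map_top_of_surjective f hf
  | succ n ih =>
    rw [lcs_succ_eq, lcs_succ_eq, Subgroup.map_commutator, ih,
      Subgroup.map_top_of_surjective f hf]

lemma le_center_of_commutator_eq_bot {L : Subgroup Q} (h : ⁅L, (⊤ : Subgroup Q)⁆ = ⊥) :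
    L ≤ Subgroup.center Q := by
  intro g hg
  rw [Subgroup.mem_center_iff]
  intro y
  have h0 : ⁅g, y⁆ ∈ (⊥ : Subgroup Q) := h ▸ Subgroup.commutator_mem_commutator hg (Subgroup.mem_top y)
  have h1 : ⁅g, y⁆ = 1 := Subgroup.mem_bot.mp h0
  exact (commutatorElement_eq_one_iff_commute.mp h1).symm.eq

lemma comm_pow_left (p q : Q) (hc : ⁅p, q⁆ ∈ Subgroup.center Q) (t : ℕ) :
    ⁅p ^ t, q⁆ = ⁅p, q⁆ ^ t := by
  induction t with
  | zero => simp
  | succ t ih =>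
    have hid : ⁅p ^ t * p, q⁆ = (p ^ t) * ⁅p, q⁆ * (p ^ t)⁻¹ * ⁅p ^ t, q⁆ := by group
    have hcen : (p ^ t) * ⁅p, q⁆ * (p ^ t)⁻¹ = ⁅p, q⁆ := by
      rw [Subgroup.mem_center_iff.mp hc (p ^ t)]; group
    rw [pow_succ, hid, ih, hcen, ← pow_succ']

def commHom (p : Q) (hc : ∀ y : Q, ⁅p, y⁆ ∈ Subgroup.center Q) : Q →* Q :=
  MonoidHom.mk' (fun y => ⁅p, y⁆) (by
    intro a b
    show ⁅p, a * b⁆ = ⁅p, a⁆ * ⁅p, b⁆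
    have hid : ⁅p, a * b⁆ = ⁅p, a⁆ * (a * ⁅p, b⁆ * a⁻¹) := by group
    rw [hid, Subgroup.mem_center_iff.mp (hc b) a]
    group)

lemma comm_zpow_right (p q : Q) (hc : ∀ y : Q, ⁅p, y⁆ ∈ Subgroup.center Q) (N : ℤ) :
    ⁅p, q ^ N⁆ = ⁅p, q⁆ ^ N :=
  map_zpow (commHom p hc) q N

lemma comm_mul_right (p a b : Q) (hc : ∀ y : Q, ⁅p, y⁆ ∈ Subgroup.center Q) :
    ⁅p, a * b⁆ = ⁅p, a⁆ * ⁅p, b⁆ :=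
  map_mul (commHom p hc) a b

end Helpers

section Key

variable {Q : Type u} [Group Q]

lemma key_lemma (M : Subgroup Q) (x : Q)
    (hgen : Subgroup.closure ((M : Set Q) ∪ {x}) = ⊤)
    {c : ℕ} (hc : 1 ≤ c) (hQc : (⊤ : Subgroup Q).lowerCentralSeries (c + 1) = ⊥)
    {N : ℤ} (hN : N ≠ 0) {u a : Q} (hu : u ∈ M) (ha : a ∈ (⊤ : Subgroup Q).lowerCentralSeries c)
    (hxN : x ^ N = u * a) (i : ℕ) :
    ∀ g ∈ (⊤ : Subgroup Q).lowerCentralSeries i,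
      ∃ t : ℕ, 0 < t ∧ g ^ t ∈ (M ⊓ (⊤ : Subgroup Q).lowerCentralSeries i) ⊔ (⊤ : Subgroup Q).lowerCentralSeries (i + 1) := by
  have hacen : a ∈ Subgroup.center Q :=
    le_center_of_commutator_eq_bot (by rw [← lcs_succ_eq]; exact hQc) ha
  induction i with
  | zero =>
    intro g _
    set R := M ⊔ (⊤ : Subgroup Q).lowerCentralSeries 1 with hR
    have hL1R : (⊤ : Subgroup Q).lowerCentralSeries 1 ≤ R := le_sup_right
    have hMR : M ≤ R := le_sup_left
    have hRn : R.Normal := by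
      constructor
      intro r hr q
      have hid : q * r * q⁻¹ = ⁅q, r⁆ * r := by group
      rw [hid]
      refine mul_mem (hL1R ?_) hr
      rw [lcs_succ_eq, Subgroup.lowerCentralSeries_zero]
      exact Subgroup.commutator_mem_commutator (Subgroup.mem_top q) (Subgroup.mem_top r)
    let π := QuotientGroup.mk' R
    have hπs : Function.Surjective π := QuotientGroup.mk'_surjective R
    have hzp : ∀ q : Q, π q ∈ Subgroup.zpowers (π x) := by
      have hle : (⊤ : Subgroup Q) ≤ Subgroup.comap π (Subgroup.zpowers (π x)) := by
        rw [← hgen, Subgroup.closure_le]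
        rintro y (hy | hy)
        · have hy1 : π y = 1 := (QuotientGroup.eq_one_iff y).mpr (hMR hy)
          have : π y ∈ Subgroup.zpowers (π x) := by rw [hy1]; exact one_mem _
          exact this
        · rcases hy with rfl
          exact Subgroup.mem_zpowers _
      intro q
      exact hle (Subgroup.mem_top q) 
    have hxN1 : (π x) ^ N = 1 := by
      rw [← map_zpow, hxN, map_mul]
      have hu1 : π u = 1 := (QuotientGroup.eq_one_iff u).mpr (hMR hu)
      have ha1 : π a = 1 :=
        (QuotientGroup.eq_one_iff a).mpr (hL1R (Subgroup.lowerCentralSeries_antitone ⊤ hc ha))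
      rw [hu1, ha1, mul_one]
    obtain ⟨j, hj⟩ := Subgroup.mem_zpowers_iff.mp (hzp g)
    have hgN : π (g ^ N) = 1 := by
      rw [map_zpow, ← hj, ← zpow_mul, mul_comm, zpow_mul, hxN1, one_zpow]
    have hgNR : g ^ N ∈ R := (QuotientGroup.eq_one_iff _).mp hgN
    refine ⟨N.natAbs, Int.natAbs_pos.mpr hN, ?_⟩
    have hmem : g ^ (N.natAbs : ℤ) ∈ R := by
      rcases Int.natAbs_eq N with h | h
      · rw [← h]; exact hgNR
      · have : (N.natAbs : ℤ) = -N := by omega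
        rw [this, zpow_neg]
        exact inv_mem hgNR
    rw [zpow_natCast] at hmem
    simpa only [Subgroup.lowerCentralSeries_zero, inf_top_eq] using hmem
  | succ i ih =>
    set Q₂ := Q ⧸ (⊤ : Subgroup Q).lowerCentralSeries (i + 2) with hQ₂
    let π : Q →* Q₂ := QuotientGroup.mk' ((⊤ : Subgroup Q).lowerCentralSeries (i + 2))
    have hπs : Function.Surjective π := QuotientGroup.mk'_surjective _
    have hkerpi : ∀ b : Q, π b = 1 ↔ b ∈ (⊤ : Subgroup Q).lowerCentralSeries (i + 2) := by
      intro b; exact QuotientGroup.eq_one_iff b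
    have hbot : (⊤ : Subgroup Q₂).lowerCentralSeries (i + 2) = ⊥ := by
      rw [← lcs_map_surjective π hπs, Subgroup.map_eq_bot_iff, QuotientGroup.ker_mk']
    have hcent : ∀ w ∈ (⊤ : Subgroup Q).lowerCentralSeries (i + 1), π w ∈ Subgroup.center Q₂ := by
      intro w hw
      have h1 : π w ∈ (⊤ : Subgroup Q₂).lowerCentralSeries (i + 1) := by
        rw [← lcs_map_surjective π hπs]
        exact Subgroup.mem_map_of_mem π hw
      exact le_center_of_commutator_eq_bot (by rw [← lcs_succ_eq]; exact hbot) h1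
    set D := (M ⊓ (⊤ : Subgroup Q).lowerCentralSeries (i + 1)) ⊔ (⊤ : Subgroup Q).lowerCentralSeries (i + 2) with hD
    have hLD : (⊤ : Subgroup Q).lowerCentralSeries (i + 2) ≤ D := le_sup_right
    have hMLD : M ⊓ (⊤ : Subgroup Q).lowerCentralSeries (i + 1) ≤ D := le_sup_left
    have hkerD : ∀ b b' : Q, π b = π b' → b' ∈ D → b ∈ D := by
      intro b b' hbb hb'
      have h1 : π (b * b'⁻¹) = 1 := by rw [map_mul, map_inv, hbb, mul_inv_cancel]
      have h2 : b * b'⁻¹ ∈ (⊤ : Subgroup Q).lowerCentralSeries (i + 2) := (hkerpi _).mp h1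
      have hb : b = (b * b'⁻¹) * b' := by group
      rw [hb]; exact mul_mem (hLD h2) hb'
    let W : Subgroup Q :=
      { carrier := {g : Q | g ∈ (⊤ : Subgroup Q).lowerCentralSeries (i + 1) ∧ ∃ t : ℕ, 0 < t ∧ g ^ t ∈ D}
        one_mem' := ⟨one_mem _, 1, one_pos, by simpa using D.one_mem⟩
        mul_mem' := by
          rintro g₁ g₂ ⟨hg₁, t₁, ht₁, hd₁⟩ ⟨hg₂, t₂, ht₂, hd₂⟩
          refine ⟨mul_mem hg₁ hg₂, t₁ * t₂, Nat.mul_pos ht₁ ht₂, ?_⟩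
          have hcomm : Commute (π g₁) (π g₂) :=
            (Subgroup.mem_center_iff.mp (hcent g₂ hg₂) (π g₁))
          have hpi : π ((g₁ * g₂) ^ (t₁ * t₂)) = π (g₁ ^ (t₁ * t₂) * g₂ ^ (t₁ * t₂)) := by
            rw [map_pow, map_mul, map_mul, map_pow, map_pow, hcomm.mul_pow]
          refine hkerD _ _ hpi (mul_mem ?_ ?_)
          · rw [pow_mul]; exact pow_mem hd₁ t₂
          · rw [mul_comm t₁ t₂, pow_mul]; exact pow_mem hd₂ t₁
        inv_mem' := by
          rintro g ⟨hg, t, ht, hd⟩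
          exact ⟨inv_mem hg, t, ht, by rw [inv_pow]; exact inv_mem hd⟩ }
    have hWmem : ∀ g : Q, g ∈ W ↔
        (g ∈ (⊤ : Subgroup Q).lowerCentralSeries (i + 1) ∧ ∃ t : ℕ, 0 < t ∧ g ^ t ∈ D) := fun g => Iff.rfl
    have hWnormal : W.Normal := by
      constructor
      rintro w ⟨hw, t, ht, hd⟩ q
      refine ⟨(Subgroup.lowerCentralSeries_normal ⊤ (i + 1)).conj_mem w hw q, t, ht, ?_⟩
      have h1 : (q * w * q⁻¹) ^ t = q * w ^ t * q⁻¹ := conj_pow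
      have h2 : q * w ^ t * q⁻¹ = ⁅q, w ^ t⁆ * w ^ t := by group
      rw [h1, h2]
      refine mul_mem (hLD ?_) hd
      have h3 : ⁅w ^ t, q⁆ ∈ (⊤ : Subgroup Q).lowerCentralSeries (i + 2) := by
        rw [lcs_succ_eq]
        exact Subgroup.commutator_mem_commutator (pow_mem hw t) (Subgroup.mem_top q)
      have h4 : ⁅q, w ^ t⁆ = ⁅w ^ t, q⁆⁻¹ := (commutatorElement_inv _ _).symm
      rw [h4]; exact inv_mem h3
    have hcommW : ∀ g ∈ (⊤ : Subgroup Q).lowerCentralSeries i, ∀ y : Q, ⁅g, y⁆ ∈ W := by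
      intro g hg
      obtain ⟨t, ht, hgt⟩ := ih g hg
      have hgt0 : (g ^ t : Q) ∈ (↑(M ⊓ (⊤ : Subgroup Q).lowerCentralSeries i ⊔ (⊤ : Subgroup Q).lowerCentralSeries (i + 1)) : Set Q) := hgt
      rw [Subgroup.mul_normal] at hgt0
      have hgt' := hgt0
      obtain ⟨m, hm, w, hw, hmw⟩ := hgt'
      have hmM : m ∈ M := hm.1
      have hmL : m ∈ (⊤ : Subgroup Q).lowerCentralSeries i := hm.2
      have hgcent : ∀ yq : Q₂, ⁅π g, yq⁆ ∈ Subgroup.center Q₂ := by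
        intro yq; obtain ⟨y, rfl⟩ := hπs yq
        have hmem : ⁅g, y⁆ ∈ (⊤ : Subgroup Q).lowerCentralSeries (i + 1) := by
          rw [lcs_succ_eq]
          exact Subgroup.commutator_mem_commutator hg (Subgroup.mem_top y)
        have := hcent _ hmem
        rwa [map_commutatorElement] at this
      -- common computation : ⁅π g ^ t, π m'⁆ = π ⁅m, m'⁆ for any m'
      have hconv : ∀ m' : Q, ⁅(π g) ^ t, π m'⁆ = π ⁅m, m'⁆ := by
        intro m'
        have e2 : (π g) ^ t = π m * π w := by
          rw [← map_pow, ← hmw, map_mul]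
        have e3 : ⁅π m * π w, π m'⁆ = (π m) * ⁅π w, π m'⁆ * (π m)⁻¹ * ⁅π m, π m'⁆ := by
          group
        have e4 : ⁅π w, π m'⁆ = 1 := by
          have hmem : ⁅w, m'⁆ ∈ (⊤ : Subgroup Q).lowerCentralSeries (i + 2) := by
            rw [lcs_succ_eq]
            exact Subgroup.commutator_mem_commutator hw (Subgroup.mem_top m')
          rw [← map_commutatorElement]
          exact (hkerpi _).mpr hmem
        rw [e2, e3, e4, map_commutatorElement]
        group
      have hMm' : ∀ m' ∈ M, ⁅m, m'⁆ ∈ M ⊓ (⊤ : Subgroup Q).lowerCentralSeries (i + 1) := by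
        intro m' hm'
        refine Subgroup.mem_inf.mpr ⟨?_, ?_⟩
        · rw [commutatorElement_def]
          exact mul_mem (mul_mem (mul_mem hmM hm') (inv_mem hmM)) (inv_mem hm')
        · rw [lcs_succ_eq]
          exact Subgroup.commutator_mem_commutator hmL (Subgroup.mem_top m')
      have hMcase : ∀ m' ∈ M, ⁅g, m'⁆ ∈ W := by
        intro m' hm'
        refine ⟨?_, t, ht, ?_⟩
        · rw [lcs_succ_eq]
          exact Subgroup.commutator_mem_commutator hg (Subgroup.mem_top m')
        · have hc1 : ⁅π g, π m'⁆ ∈ Subgroup.center Q₂ := hgcent (π m')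
          have e1 : π (⁅g, m'⁆ ^ t) = π ⁅m, m'⁆ := by
            rw [map_pow, map_commutatorElement, ← comm_pow_left _ _ hc1, hconv]
          exact hkerD _ _ e1 (hMLD (hMm' m' hm'))
      have hXcase : ⁅g, x⁆ ∈ W := by
        have htne : (t : ℤ) ≠ 0 := by exact_mod_cast ht.ne'
        refine ⟨?_, (N * t).natAbs, Int.natAbs_pos.mpr (mul_ne_zero hN htne), ?_⟩
        · rw [lcs_succ_eq]
          exact Subgroup.commutator_mem_commutator hg (Subgroup.mem_top x)
        · have e1 : (π ⁅g, x⁆) ^ (N * (t : ℤ)) = π ⁅m, u⁆ := by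
            rw [map_commutatorElement, zpow_mul, ← comm_zpow_right _ _ hgcent N]
            have e2 : (π x) ^ N = π u * π a := by rw [← map_zpow, hxN, map_mul]
            rw [e2, comm_mul_right _ _ _ hgcent]
            have e3 : ⁅π g, π a⁆ = 1 := by
              rw [← map_commutatorElement]
              have : ⁅g, a⁆ = 1 := commutatorElement_eq_one_iff_commute.mpr
                (Subgroup.mem_center_iff.mp hacen g)
              rw [this, map_one]
            rw [e3, mul_one, zpow_natCast, ← comm_pow_left _ _ (hgcent (π u)), hconv]
          have e5 : π (⁅g, x⁆ ^ (N * (t : ℤ))) = π ⁅m, u⁆ := by rw [map_zpow, e1]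
          have hzD : ⁅g, x⁆ ^ (N * (t : ℤ)) ∈ D := hkerD _ _ e5 (hMLD (hMm' u hu))
          have hfin : ⁅g, x⁆ ^ (((N * (t : ℤ)).natAbs : ℤ)) ∈ D := by
            rcases Int.natAbs_eq (N * (t : ℤ)) with h | h
            · rw [← h]; exact hzD
            · have : ((N * (t : ℤ)).natAbs : ℤ) = -(N * (t : ℤ)) := by omega
              rw [this, zpow_neg]; exact inv_mem hzD
          rwa [zpow_natCast] at hfin
      intro y
      let Y : Subgroup Q :=
        { carrier := {y : Q | ⁅g, y⁆ ∈ W}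
          one_mem' := by
            show ⁅g, (1 : Q)⁆ ∈ W
            rw [commutatorElement_one_right]; exact W.one_mem
          mul_mem' := by
            intro y z hy hz
            show ⁅g, y * z⁆ ∈ W
            have hid : ⁅g, y * z⁆ = ⁅g, y⁆ * (y * ⁅g, z⁆ * y⁻¹) := by group
            rw [hid]
            exact mul_mem hy (hWnormal.conj_mem _ hz y)
          inv_mem' := by
            intro y hy
            show ⁅g, y⁻¹⁆ ∈ W
            have hid : ⁅g, y⁻¹⁆ = y⁻¹ * ⁅g, y⁆⁻¹ * (y⁻¹)⁻¹ := by group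
            rw [hid]
            exact hWnormal.conj_mem _ (inv_mem hy) y⁻¹ }
      have hYtop : (⊤ : Subgroup Q) ≤ Y := by
        rw [← hgen, Subgroup.closure_le]
        rintro y' (hy' | hy')
        · exact hMcase y' hy'
        · rcases hy' with rfl; exact hXcase
      exact hYtop (Subgroup.mem_top y)
    intro g' hg'
    have hLW : (⊤ : Subgroup Q).lowerCentralSeries (i + 1) ≤ W := by
      rw [lcs_succ_eq]
      exact Subgroup.commutator_le.mpr fun g hg y _ => hcommW g hg y
    obtain ⟨_, t, ht, hd⟩ := hLW hg'
    exact ⟨t, ht, hd⟩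

theorem lemA : ∀ (c : ℕ) {Q : Type u} [Group Q] (M : Subgroup Q) (x : Q),
    Subgroup.closure ((M : Set Q) ∪ {x}) = ⊤ →
    (⊤ : Subgroup Q).lowerCentralSeries c = ⊥ → ∀ n : ℤ,
    x ^ n ∈ Subgroup.closure (⋃ k : ℤ, (fun g => x ^ k * g * x ^ (-k)) '' (M : Set Q)) →
    ∃ m : ℕ, 0 < m ∧ x ^ (n * (m : ℤ)) ∈ M := by
  intro c
  induction c with
  | zero =>
    intro Q _ M x hgen hc n hP
    refine ⟨1, one_pos, ?_⟩
    have htop : (⊤ : Subgroup Q) = ⊥ := by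
      rw [← Subgroup.lowerCentralSeries_zero (⊤ : Subgroup Q)]; exact hc
    have h1 : x ^ (n * ((1 : ℕ) : ℤ)) ∈ (⊥ : Subgroup Q) := by
      rw [← htop]; exact Subgroup.mem_top _
    rw [Subgroup.mem_bot.mp h1]
    exact M.one_mem
  | succ c ihc =>
    intro Q _ M x hgen hc n hP
    by_cases hn : n = 0
    · refine ⟨1, one_pos, ?_⟩
      simp only [hn, zero_mul, zpow_zero]
      exact M.one_mem
    rcases Nat.eq_zero_or_pos c with rfl | hcpos
    · -- abelian case
      have hcomm : ∀ a b : Q, ⁅a, b⁆ = 1 := by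
        intro a b
        have hmem : ⁅a, b⁆ ∈ (⊤ : Subgroup Q).lowerCentralSeries 1 := by
          rw [lcs_succ_eq]
          exact Subgroup.commutator_mem_commutator (Subgroup.mem_top a) (Subgroup.mem_top b)
        rw [hc] at hmem
        exact Subgroup.mem_bot.mp hmem
    
      have hPM : Subgroup.closure (⋃ k : ℤ, (fun g => x ^ k * g * x ^ (-k)) '' (M : Set Q)) ≤ M := by
        rw [Subgroup.closure_le]
        intro y hy
        simp only [Set.mem_iUnion, Set.mem_image] at hy
        obtain ⟨k, g, hgM, rfl⟩ := hy
        have hc' : x ^ k * g = g * x ^ k :=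
          (commutatorElement_eq_one_iff_commute.mp (hcomm (x ^ k) g)).eq
        have hxg : x ^ k * g * x ^ (-k) = g := by
          rw [hc', mul_assoc, ← zpow_add, add_neg_cancel, zpow_zero, mul_one]
        rw [hxg]
        exact hgM
      refine ⟨1, one_pos, ?_⟩
      have := hPM hP
      simpa using this
    · -- main step, c ≥ 1
      set A := (⊤ : Subgroup Q).lowerCentralSeries c with hA
      let π : Q →* Q ⧸ A := QuotientGroup.mk' A
      have hπs : Function.Surjective π := QuotientGroup.mk'_surjective A
      have hA_bot : (⊤ : Subgroup (Q ⧸ A)).lowerCentralSeries c = ⊥ := by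
        rw [← lcs_map_surjective π hπs, Subgroup.map_eq_bot_iff, QuotientGroup.ker_mk']
      have hgen' : Subgroup.closure ((↑(Subgroup.map π M) : Set (Q ⧸ A)) ∪ {π x}) = ⊤ := by
        have h1 : Subgroup.map π (Subgroup.closure ((M : Set Q) ∪ {x})) = ⊤ := by
          rw [hgen]; exact Subgroup.map_top_of_surjective π hπs
        rw [MonoidHom.map_closure, Set.image_union, Set.image_singleton,
          ← Subgroup.coe_map] at h1
        exact h1
      have hP' : (π x) ^ n ∈ Subgroup.closure
          (⋃ k : ℤ, (fun g => (π x) ^ k * g * (π x) ^ (-k)) '' (↑(Subgroup.map π M) : Set (Q ⧸ A))) := by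
        have h1 : π (x ^ n) ∈ Subgroup.map π
            (Subgroup.closure (⋃ k : ℤ, (fun g => x ^ k * g * x ^ (-k)) '' (M : Set Q))) :=
          Subgroup.mem_map_of_mem π hP
        rw [MonoidHom.map_closure, map_zpow] at h1
        refine Subgroup.closure_mono ?_ h1
        intro y hy
        simp only [Set.mem_image, Set.mem_iUnion] at hy ⊢
        obtain ⟨z, ⟨k, g, hgM, rfl⟩, rfl⟩ := hy
        refine ⟨k, π g, ⟨g, hgM, rfl⟩, ?_⟩
        rw [map_mul, map_mul, map_zpow, map_zpow]
      obtain ⟨m₁, hm₁, hmem₁⟩ := ihc (Subgroup.map π M) (π x) hgen' hA_bot n hP'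
      have hx1 : x ^ (n * (m₁ : ℤ)) ∈ M ⊔ A := by
        have h2 : x ^ (n * (m₁ : ℤ)) ∈ Subgroup.comap π (Subgroup.map π M) := by
          rw [Subgroup.mem_comap, map_zpow]; exact hmem₁
        rwa [Subgroup.comap_map_eq, QuotientGroup.ker_mk'] at h2
      have hx2 : (x ^ (n * (m₁ : ℤ)) : Q) ∈ (↑(M ⊔ A) : Set Q) := hx1
      rw [Subgroup.mul_normal] at hx2
      obtain ⟨u, hu, a, ha, hua⟩ := hx2
      have hNne : n * (m₁ : ℤ) ≠ 0 :=
        mul_ne_zero hn (by exact_mod_cast hm₁.ne')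
      obtain ⟨t, ht, hta⟩ :=
        key_lemma M x hgen hcpos hc hNne hu ha hua.symm c a ha
      rw [hc, sup_bot_eq] at hta
      have haM : a ^ t ∈ M := (Subgroup.mem_inf.mp hta).1
      refine ⟨m₁ * t, Nat.mul_pos hm₁ ht, ?_⟩
      have hacen : a ∈ Subgroup.center Q :=
        le_center_of_commutator_eq_bot (by rw [← lcs_succ_eq]; exact hc) ha
      have hco : Commute u a := Subgroup.mem_center_iff.mp hacen u
      have hexp : x ^ (n * ((m₁ * t : ℕ) : ℤ)) = (x ^ (n * (m₁ : ℤ))) ^ t := by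
        rw [← zpow_natCast (x ^ (n * (m₁ : ℤ))) t, ← zpow_mul]
        congr 1
        push_cast; ring
      rw [hexp, ← hua, hco.mul_pow]
      exact mul_mem (pow_mem hu t) haM

/-- Let `x` be an element of infinite order in a locally nilpotent group `G`, and let `H`
be maximal among the subgroups of `G` with `H ∩ ⟨x⟩ = 1`.  Then `x` normalizes `H`. -/
theorem normalizes_of_maximal_trivial_inter_zpowers {G : Type u} [Group G]
    (hG : IsLocallyNilpotent G) (x : G) (hx : ¬ IsOfFinOrder x)
    (H : Subgroup G) (hmeet : H ⊓ Subgroup.zpowers x = ⊥)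
    (hmax : ∀ K : Subgroup G, H ≤ K → K ⊓ Subgroup.zpowers x = ⊥ → K = H) :
    ∀ h ∈ H, x * h * x⁻¹ ∈ H := by
  intro h hh
  set y := x * h * x⁻¹ with hy
  set K := H ⊔ Subgroup.zpowers y with hKdef
  have hK : K ⊓ Subgroup.zpowers x = ⊥ := by
    rw [eq_bot_iff]
    intro g hg
    rw [Subgroup.mem_inf] at hg
    obtain ⟨hgK, hgz⟩ := hg
    obtain ⟨n, hn⟩ := Subgroup.mem_zpowers_iff.mp hgz
    -- extract a list representation
    have hgK' : g ∈ Subgroup.closure ((H : Set G) ∪ (Subgroup.zpowers y : Set G)) := by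
      rwa [← Subgroup.sup_eq_closure]
    have hgm : g ∈ Submonoid.closure (((H : Set G) ∪ (Subgroup.zpowers y : Set G)) ∪
        ((H : Set G) ∪ (Subgroup.zpowers y : Set G))⁻¹) := by
      have := hgK'
      rw [← Subgroup.mem_toSubmonoid, Subgroup.closure_toSubmonoid] at this
      exact this
    have hsinv : (((H : Set G) ∪ (Subgroup.zpowers y : Set G)) ∪
        ((H : Set G) ∪ (Subgroup.zpowers y : Set G))⁻¹) ⊆
        ((H : Set G) ∪ (Subgroup.zpowers y : Set G)) := by
      rintro z (hz | hz)
      · exact hz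
      · rcases hz with hz | hz
        · exact Or.inl (H.inv_mem_iff.mp hz)
        · exact Or.inr ((Subgroup.zpowers y).inv_mem_iff.mp hz)
    have hgm2 : g ∈ Submonoid.closure ((H : Set G) ∪ (Subgroup.zpowers y : Set G)) :=
      Submonoid.closure_mono hsinv hgm
    obtain ⟨l, hl, hprod⟩ := Submonoid.exists_list_of_mem_closure hgm2
    -- the finite generating set
    set S : Set G := insert h {z : G | z ∈ l ∧ z ∈ H} with hSdef
    have hSfin : S.Finite :=
      Set.Finite.insert h ((l.finite_toSet).subset fun z hz => hz.1)
    have hSH : S ⊆ (H : Set G) := by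
      rintro z (rfl | hz)
      · exact hh
      · exact hz.2
    set M : Subgroup G := Subgroup.closure S with hMdef
    have hMH : M ≤ H := (Subgroup.closure_le H).mpr hSH
    have hhM : h ∈ M := Subgroup.subset_closure (Or.inl rfl)
    set F : Subgroup G := Subgroup.closure (S ∪ {x}) with hFdef
    have hMF : M ≤ F := Subgroup.closure_mono Set.subset_union_left
    have hxF : x ∈ F := Subgroup.subset_closure (Or.inr rfl)
    have hFG : F.FG :=
      (Subgroup.fg_iff F).mpr ⟨S ∪ {x}, rfl, hSfin.union (Set.finite_singleton x)⟩
    haveI hnil : Group.IsNilpotent ↥F := hG F hFG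
    obtain ⟨c, hcF⟩ := Subgroup.nilpotent_iff_lowerCentralSeries.mp hnil
    set x' : ↥F := ⟨x, hxF⟩ with hx'def
    set M' : Subgroup ↥F := M.subgroupOf F with hM'def
    -- generation
    have hmapM' : Subgroup.map F.subtype M' = M := by
      rw [hM'def, Subgroup.subgroupOf_map_subtype, inf_eq_left.mpr hMF]
    have hgen' : Subgroup.closure ((M' : Set ↥F) ∪ {x'}) = ⊤ := by
      apply Subgroup.map_injective F.subtype_injective
      rw [MonoidHom.map_closure, Set.image_union, Set.image_singleton]
      have h1 : F.subtype '' (M' : Set ↥F) = (M : Set G) := by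
        rw [← Subgroup.coe_map, hmapM']
      rw [h1]
      show Subgroup.closure ((M : Set G) ∪ {x}) = Subgroup.map F.subtype ⊤
      rw [← MonoidHom.range_eq_map, Subgroup.range_subtype]
      rw [Subgroup.closure_union, Subgroup.closure_eq, hMdef, ← Subgroup.closure_union]
    -- the conjugate closure membership on the G side
    have hPG : x ^ n ∈ Subgroup.closure
        (⋃ k : ℤ, (fun g => x ^ k * g * x ^ (-k)) '' (M : Set G)) := by
      rw [hn, ← hprod]
      refine Subgroup.list_prod_mem _ ?_
      intro z hz
      rcases hl z hz with hzH | hzy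
      · have hzS : z ∈ S := Or.inr ⟨hz, hzH⟩
        have hzM : z ∈ M := Subgroup.subset_closure hzS
        apply Subgroup.subset_closure
        refine Set.mem_iUnion.mpr ⟨0, ?_⟩
        exact ⟨z, hzM, by simp⟩
      · obtain ⟨j, hj⟩ := Subgroup.mem_zpowers_iff.mp hzy
        have hyj : y ^ j = x * h ^ j * x⁻¹ := conj_zpow
        apply Subgroup.subset_closure
        refine Set.mem_iUnion.mpr ⟨1, ?_⟩
        refine ⟨h ^ j, Subgroup.zpow_mem M hhM j, ?_⟩
        show x ^ (1 : ℤ) * h ^ j * x ^ (-(1:ℤ)) = z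
        rw [zpow_one, zpow_neg, zpow_one, ← hyj, hj]
    -- transfer to F
    have hP' : x' ^ n ∈ Subgroup.closure
        (⋃ k : ℤ, (fun g => x' ^ k * g * x' ^ (-k)) '' (M' : Set ↥F)) := by
      have hmapP : Subgroup.map F.subtype (Subgroup.closure
          (⋃ k : ℤ, (fun g => x' ^ k * g * x' ^ (-k)) '' (M' : Set ↥F))) =
          Subgroup.closure (⋃ k : ℤ, (fun g => x ^ k * g * x ^ (-k)) '' (M : Set G)) := by
        rw [MonoidHom.map_closure, Set.image_iUnion]
        have hset : ∀ k : ℤ, (⇑F.subtype '' ((fun g => x' ^ k * g * x' ^ (-k)) '' (M' : Set ↥F))) =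
            ((fun g => x ^ k * g * x ^ (-k)) '' (M : Set G)) := by
          intro k
          rw [Set.image_image]
          have hfun : (fun g : ↥F => (F.subtype) (x' ^ k * g * x' ^ (-k))) =
              (fun g : ↥F => x ^ k * (F.subtype g) * x ^ (-k)) := by
            funext g
            simp [Subgroup.coe_subtype, Subgroup.coe_zpow, hx'def]
          rw [hfun, ← Set.image_image (fun w : G => x ^ k * w * x ^ (-k)) (fun g : ↥F => F.subtype g)]
          rw [← Subgroup.coe_map, hmapM']
        rw [Set.iUnion_congr hset]
      have hx'' : x ^ n ∈ Subgroup.map F.subtype (Subgroup.closure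
          (⋃ k : ℤ, (fun g => x' ^ k * g * x' ^ (-k)) '' (M' : Set ↥F))) := by
        rw [hmapP]; exact hPG
      obtain ⟨b, hb, hbe⟩ := hx''
      have : b = x' ^ n := by
        apply F.subtype_injective
        rw [hbe]
        simp [Subgroup.coe_subtype, Subgroup.coe_zpow, hx'def]
      rwa [this] at hb
    -- apply the main nilpotent lemma
    obtain ⟨m, hm, hfin⟩ := lemA c M' x' hgen' hcF n hP'
    have hfinG : x ^ (n * (m : ℤ)) ∈ M := by
      have := Subgroup.mem_subgroupOf.mp hfin
      simpa [Subgroup.coe_zpow] using this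
    have hzmem : x ^ (n * (m : ℤ)) ∈ H ⊓ Subgroup.zpowers x :=
      Subgroup.mem_inf.mpr ⟨hMH hfinG, Subgroup.mem_zpowers_iff.mpr ⟨n * m, rfl⟩⟩
    rw [hmeet, Subgroup.mem_bot] at hzmem
    -- conclude n = 0
    have hnm : n * (m : ℤ) = 0 := by
      by_contra hne
      apply hx
      refine isOfFinOrder_iff_pow_eq_one.mpr ⟨(n * (m : ℤ)).natAbs, Int.natAbs_pos.mpr hne, ?_⟩
      rcases Int.natAbs_eq (n * (m : ℤ)) with he | he
      · rw [← zpow_natCast, ← he, hzmem]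
      · rw [← zpow_natCast, ← neg_neg ((((n * (m : ℤ)).natAbs : ℤ))), ← he, zpow_neg, hzmem, inv_one]
    have hn0 : n = 0 := by
      rcases mul_eq_zero.mp hnm with h0 | h0
      · exact h0
      · exact absurd h0 (by exact_mod_cast hm.ne')
    rw [Subgroup.mem_bot, ← hn, hn0, zpow_zero]
  have hKH : K = H := hmax K le_sup_left hK
  have : y ∈ K := (le_sup_right : Subgroup.zpowers y ≤ K) (Subgroup.mem_zpowers y)
  rwa [hKH] at this
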